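/- Let λ > 0, μ > 0, c > 0. Then for every r > 0, 0 < (λμ/(2πc)) ∫_{r/c}^∞ e^{-(λ+μ)τ} exp((λ/c)√(c²τ² - r²)) / √(c²τ² - r²) dτ < ∞; that is, the stationary density of the heavy-particle model is finite and strictly positive at every point away from the source. -/

import Mathlib

open MeasureTheory Real Set

theorem stmt8 (lam mu c : ℝ) (hlam : 0 < lam) (hmu : 0 < mu) (hc : 0 < c) (r : ℝ) (hr : 0 < r) :
    IntegrableOn (fun τ : ℝ =>
        Real.exp (-(lam + mu) * τ) *
          (Real.exp ((lam / c) * Real.sqrt (c ^ 2 * τ ^ 2 - r ^ 2)) /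
            Real.sqrt (c ^ 2 * τ ^ 2 - r ^ 2))) (Ioi (r / c)) ∧
    0 < (lam * mu / (2 * π * c)) *
        ∫ τ in Ioi (r / c),
          Real.exp (-(lam + mu) * τ) *
            (Real.exp ((lam / c) * Real.sqrt (c ^ 2 * τ ^ 2 - r ^ 2)) /
              Real.sqrt (c ^ 2 * τ ^ 2 - r ^ 2)) := by
  set a := r / c with ha_def
  have ha : 0 < a := div_pos hr hc
  have hra : r = c * a := by have := hc.ne'; rw [ha_def]; field_simp
  set f : ℝ → ℝ := fun τ => Real.exp (-(lam + mu) * τ) *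
      (Real.exp ((lam / c) * Real.sqrt (c ^ 2 * τ ^ 2 - r ^ 2)) /
        Real.sqrt (c ^ 2 * τ ^ 2 - r ^ 2)) with hf_def
  have hpos : ∀ τ ∈ Ioi a, 0 < c ^ 2 * τ ^ 2 - r ^ 2 := by
    intro τ hτ
    have h1 : a < τ := hτ
    rw [hra]
    nlinarith [mul_pos (mul_pos hc hc)
      (mul_pos (sub_pos.mpr h1) (show (0:ℝ) < τ + a by linarith))]
  have hfpos : ∀ τ ∈ Ioi a, 0 < f τ := fun τ hτ =>
    mul_pos (exp_pos _) (div_pos (exp_pos _) (Real.sqrt_pos.mpr (hpos τ hτ)))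
  have hcont : ContinuousOn f (Ioi a) := by
    apply ContinuousOn.mul (by fun_prop)
    apply ContinuousOn.div (by fun_prop) (by fun_prop)
    exact fun τ hτ => ne_of_gt (Real.sqrt_pos.mpr (hpos τ hτ))
  have hmeas : AEStronglyMeasurable f (volume.restrict (Ioi a)) :=
    hcont.aestronglyMeasurable measurableSet_Ioi
  -- Integrability on (a, a+1]
  have hint1 : IntegrableOn f (Ioc a (a + 1)) := by
    set K : ℝ := Real.exp (lam * (a + 1)) / (c * Real.sqrt (2 * a)) with hK
    have hKpos : 0 < K := div_pos (exp_pos _)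
      (mul_pos hc (Real.sqrt_pos.mpr (by linarith)))
    have hg : IntegrableOn (fun τ => K * (τ - a) ^ (-(1/2) : ℝ)) (Ioc a (a + 1)) := by
      apply Integrable.const_mul
      have h1 : IntervalIntegrable (fun x : ℝ => x ^ (-(1/2) : ℝ)) volume 0 1 :=
        intervalIntegral.intervalIntegrable_rpow' (by norm_num)
      have h2 := h1.comp_sub_right a
      rw [zero_add] at h2
      have h3 := (intervalIntegrable_iff_integrableOn_Ioc_of_le (by linarith)).mp h2
      rwa [show (1:ℝ) + a = a + 1 by ring] at h3
    apply hg.integrable.mono' (hmeas.mono_set Ioc_subset_Ioi_self)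
    rw [ae_restrict_iff' measurableSet_Ioc]
    filter_upwards with τ hτ
    obtain ⟨hτ1, hτ2⟩ := hτ
    have hτa : τ ∈ Ioi a := hτ1
    have hsq : 0 < c ^ 2 * τ ^ 2 - r ^ 2 := hpos τ hτa
    have hτ0 : 0 < τ := lt_trans ha hτ1
    rw [Real.norm_of_nonneg (hfpos τ hτa).le]
    have e1 : Real.exp (-(lam + mu) * τ) ≤ 1 := by
      apply Real.exp_le_one_iff.mpr
      nlinarith [mul_pos (show (0:ℝ) < lam + mu by linarith) hτ0]
    have hsqrt_ub : Real.sqrt (c ^ 2 * τ ^ 2 - r ^ 2) ≤ c * τ := by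
      have h6 : Real.sqrt (c ^ 2 * τ ^ 2 - r ^ 2) ≤ Real.sqrt ((c * τ) ^ 2) := by
        apply Real.sqrt_le_sqrt; nlinarith
      rwa [Real.sqrt_sq (mul_nonneg hc.le hτ0.le)] at h6
    have h4 : (lam / c) * (c * τ) = lam * τ := by field_simp
    have e2 : Real.exp ((lam / c) * Real.sqrt (c ^ 2 * τ ^ 2 - r ^ 2)) ≤
        Real.exp (lam * (a + 1)) := by
      apply Real.exp_le_exp.mpr
      have h3 : (lam / c) * Real.sqrt (c ^ 2 * τ ^ 2 - r ^ 2) ≤ (lam / c) * (c * τ) :=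
        mul_le_mul_of_nonneg_left hsqrt_ub (by positivity)
      rw [h4] at h3
      nlinarith
    have hsqrt_lb : c * Real.sqrt (2 * a) * Real.sqrt (τ - a) ≤
        Real.sqrt (c ^ 2 * τ ^ 2 - r ^ 2) := by
      apply Real.le_sqrt_of_sq_le
      have e2a : (Real.sqrt (2 * a)) ^ 2 = 2 * a := Real.sq_sqrt (by linarith)
      have e2b : (Real.sqrt (τ - a)) ^ 2 = τ - a := Real.sq_sqrt (by linarith)
      have hexpand : (c * Real.sqrt (2 * a) * Real.sqrt (τ - a)) ^ 2 =
          c ^ 2 * (2 * a) * (τ - a) := by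
        rw [mul_pow, mul_pow, e2a, e2b]
      rw [hexpand, hra]
      nlinarith [mul_nonneg (sq_nonneg c) (sq_nonneg (τ - a))]
    have hden : 0 < c * Real.sqrt (2 * a) * Real.sqrt (τ - a) := by
      have h7 : 0 < τ - a := by linarith
      positivity
    calc f τ ≤ 1 * (Real.exp (lam * (a + 1)) /
          (c * Real.sqrt (2 * a) * Real.sqrt (τ - a))) := by
          apply mul_le_mul e1 _ (by positivity) zero_le_one
          exact div_le_div₀ (exp_pos _).le e2 hden hsqrt_lb
      _ = K * (τ - a) ^ (-(1/2) : ℝ) := by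
          rw [one_mul, hK, Real.rpow_neg (by linarith : (0:ℝ) ≤ τ - a),
            ← Real.sqrt_eq_rpow, ← div_div, div_eq_mul_inv (_ / _)]
  -- Integrability on (a+1, ∞)
  have hint2 : IntegrableOn f (Ioi (a + 1)) := by
    set D : ℝ := Real.sqrt (c ^ 2 * (a + 1) ^ 2 - r ^ 2) with hD
    have hD1 : 0 < c ^ 2 * (a + 1) ^ 2 - r ^ 2 := hpos (a + 1) (by simp)
    have hDpos : 0 < D := Real.sqrt_pos.mpr hD1
    have hg : IntegrableOn (fun τ => (1 / D) * Real.exp (-mu * τ)) (Ioi (a + 1)) :=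
      (exp_neg_integrableOn_Ioi (a + 1) hmu).const_mul _
    apply hg.integrable.mono' (hmeas.mono_set (Ioi_subset_Ioi (by linarith)))
    rw [ae_restrict_iff' measurableSet_Ioi]
    filter_upwards with τ hτ
    have hτ1 : a + 1 < τ := hτ
    have hτa : τ ∈ Ioi a := by simp only [mem_Ioi]; linarith
    have hτ0 : 0 < τ := by linarith
    have hsq : 0 < c ^ 2 * τ ^ 2 - r ^ 2 := hpos τ hτa
    rw [Real.norm_of_nonneg (hfpos τ hτa).le]
    have hsqrt_ub : Real.sqrt (c ^ 2 * τ ^ 2 - r ^ 2) ≤ c * τ := by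
      have h6 : Real.sqrt (c ^ 2 * τ ^ 2 - r ^ 2) ≤ Real.sqrt ((c * τ) ^ 2) := by
        apply Real.sqrt_le_sqrt; nlinarith
      rwa [Real.sqrt_sq (mul_nonneg hc.le hτ0.le)] at h6
    have h4 : (lam / c) * (c * τ) = lam * τ := by field_simp
    have hexp : Real.exp (-(lam + mu) * τ) *
        Real.exp ((lam / c) * Real.sqrt (c ^ 2 * τ ^ 2 - r ^ 2)) ≤ Real.exp (-mu * τ) := by
      rw [← Real.exp_add]
      apply Real.exp_le_exp.mpr
      have h3 : (lam / c) * Real.sqrt (c ^ 2 * τ ^ 2 - r ^ 2) ≤ (lam / c) * (c * τ) :=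
        mul_le_mul_of_nonneg_left hsqrt_ub (by positivity)
      rw [h4] at h3
      linarith
    have hDle : D ≤ Real.sqrt (c ^ 2 * τ ^ 2 - r ^ 2) := by
      apply Real.sqrt_le_sqrt
      nlinarith [mul_nonneg (mul_nonneg (mul_pos hc hc).le
        (show (0:ℝ) ≤ τ - (a + 1) by linarith)) (show (0:ℝ) ≤ τ + (a + 1) by linarith)]
    calc f τ = (Real.exp (-(lam + mu) * τ) *
          Real.exp ((lam / c) * Real.sqrt (c ^ 2 * τ ^ 2 - r ^ 2))) /
          Real.sqrt (c ^ 2 * τ ^ 2 - r ^ 2) := by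
          simp only [hf_def]; ring
      _ ≤ Real.exp (-mu * τ) / D := div_le_div₀ (exp_pos _).le hexp hDpos hDle
      _ = (1 / D) * Real.exp (-mu * τ) := by ring
  have hint : IntegrableOn f (Ioi a) := by
    have hu : Ioc a (a + 1) ∪ Ioi (a + 1) = Ioi a := Ioc_union_Ioi_eq_Ioi (by linarith)
    rw [← hu]
    exact hint1.union hint2
  refine ⟨hint, ?_⟩
  apply mul_pos (by positivity)
  rw [setIntegral_pos_iff_support_of_nonneg_ae]
  · have hsup : Ioi a ⊆ Function.support f ∩ Ioi a := fun τ hτ =>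
      ⟨ne_of_gt (hfpos τ hτ), hτ⟩
    calc (0 : ENNReal) < volume (Ioi a) := by simp
      _ ≤ volume (Function.support f ∩ Ioi a) := measure_mono hsup
  · exact (ae_restrict_iff' measurableSet_Ioi).mpr
      (Filter.Eventually.of_forall fun τ hτ => (hfpos τ hτ).le)
  · exact hint
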